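/- arXiv:math/0309049 — 2 statements merged into one kernel-verified Lean document; each statement's English description precedes it below -/
import Mathlib

section
/- Let a : Fin (n+1) → ℕ satisfy: for each odd i < n, a_i > a_{i−1} and a_i > a_{i+1}; and suppose the sequence b obtained from a by deleting consecutive repeated values (and the induced alternating subsequence) has a strict local maximum at position p. Then there exists an odd index j of a with a_j equal to b_p. (Each thick level of the underlying splitting comes from a thick level of the original.) -/
/-- Abstract version of the "underlying HST splitting" lemma at the level of complexity
sequences.  Let `a : {0,…,n} → ℕ` satisfy: for each odd `i < n`, `a_i > a_{i−1}` and
`a_i > a_{i+1}`.  Let `s : {0,…,n} → {0,…,m}` be a monotone surjective collapse map with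
`a` constant on its fibers (so `b ∘ s = a`, where `b` is the collapsed sequence).  If `b`
has a strict local maximum at position `p`, then there exists an odd index `j` of `a`
with `a_j = b_p`: each thick level of the underlying splitting comes from a thick level
of the original. -/
theorem collapsed_local_max_from_odd_index (n m : ℕ) (a b s : ℕ → ℕ)
    (hle : ∀ x ≤ n, s x ≤ m)
    (hsurj : ∀ q ≤ m, ∃ x ≤ n, s x = q)
    (hmono : ∀ x y : ℕ, x ≤ y → y ≤ n → s x ≤ s y)
    (hconst : ∀ x ≤ n, b (s x) = a x)
    (halt : ∀ i : ℕ, Odd i → i < n → a (i - 1) < a i ∧ a (i + 1) < a i)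
    (p : ℕ) (hp0 : 0 < p) (hpm : p < m)
    (hmaxl : b (p - 1) < b p) (hmaxr : b (p + 1) < b p) :
    ∃ j ≤ n, Odd j ∧ a j = b p := by
  obtain ⟨x, hxn, hxp⟩ := hsurj p (le_of_lt hpm)
  obtain ⟨y, hyn, hyp⟩ := hsurj (p - 1) (by omega)
  obtain ⟨z, hzn, hzp⟩ := hsurj (p + 1) (by omega)
  have hyx : y < x := by
    by_contra h
    have := hmono x y (by omega) hyn
    omega
  have hxz : x < z := by
    by_contra h
    have := hmono z x (by omega) hxn
    omega
  rcases Nat.even_or_odd x with hx | hx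
  · -- x even
    obtain ⟨k, hk⟩ := hx
    have hx2 : 2 ≤ x := by omega
    by_cases h1 : s (x - 1) = p
    · refine ⟨x - 1, by omega, ⟨k - 1, by omega⟩, ?_⟩
      rw [← hconst (x - 1) (by omega), h1]
    · by_cases h2 : s (x + 1) = p
      · refine ⟨x + 1, by omega, ⟨k, by omega⟩, ?_⟩
        rw [← hconst (x + 1) (by omega), h2]
      · exfalso
        have hs1le : s (x - 1) ≤ s x := hmono (x - 1) x (by omega) hxn
        have hs1ge : s y ≤ s (x - 1) := hmono y (x - 1) (by omega) (by omega)
        have hs1 : s (x - 1) = p - 1 := by omega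
        have hs2le : s (x + 1) ≤ s z := hmono (x + 1) z (by omega) hzn
        have hs2ge : s x ≤ s (x + 1) := hmono x (x + 1) (by omega) (by omega)
        have hs2 : s (x + 1) = p + 1 := by omega
        have ha1 : a (x - 1) = b (p - 1) := by
          rw [← hconst (x - 1) (by omega), hs1]
        have hax : a x = b p := by rw [← hconst x hxn, hxp]
        have hodd : Odd (x - 1) := ⟨k - 1, by omega⟩
        have h := halt (x - 1) hodd (by omega)
        have he : x - 1 + 1 = x := by omega
        rw [he] at h
        omega
  · exact ⟨x, hxn, hx, by rw [← hconst x hxn, hxp]⟩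
end

section
/- Suppose {F_i}_{i=0}^{n} is an HST splitting in which some thick level F_p (p odd, p < n) admits a weak reduction producing surfaces F_D, F_{DE}, F_E with c(F_D) < c(F_p), c(F_E) < c(F_p), and c(F_{DE}) < min(c(F_D), c(F_E)). Then each of the four replacement operations — (1) replace F_p by {F_D, F_{DE}, F_E}; (2) replace {F_{p−1}, F_p} by {F_{DE}, F_E}; (3) replace {F_p, F_{p+1}} by {F_D, F_{DE}}; (4) replace {F_{p−1}, F_p, F_{p+1}} by {F_{DE}} — produces a sequence whose multiset of odd-index values is strictly smaller in the lexicographic order on non-increasing enumerations. -/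
/-- The strict lexicographic order on multisets of natural numbers, obtained by
enumerating each multiset in non-increasing order and comparing lexicographically. -/
def MultisetLexLT (s t : Multiset ℕ) : Prop :=
  List.Lex (· < ·) ((Multiset.sort s (· ≤ ·)).reverse) ((Multiset.sort t (· ≤ ·)).reverse)

/-- The non-increasing enumeration of a multiset of naturals. -/
def sortDesc (s : Multiset ℕ) : List ℕ := (Multiset.sort s (· ≤ ·)).reverse

lemma multisetLexLT_iff (s t : Multiset ℕ) :
    MultisetLexLT s t ↔ List.Lex (· < ·) (sortDesc s) (sortDesc t) := Iff.rfl

lemma sortDesc_sorted (s : Multiset ℕ) : (sortDesc s).Pairwise (· ≥ ·) := by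
  have h := Multiset.pairwise_sort s (· ≤ ·)
  unfold sortDesc
  rw [List.pairwise_reverse]
  exact h

lemma mem_sortDesc {s : Multiset ℕ} {a : ℕ} : a ∈ sortDesc s ↔ a ∈ s := by
  unfold sortDesc
  rw [List.mem_reverse, Multiset.mem_sort]

lemma coe_sortDesc (s : Multiset ℕ) : (↑(sortDesc s) : Multiset ℕ) = s := by
  unfold sortDesc
  rw [← Multiset.coe_reverse, List.reverse_reverse, Multiset.sort_eq]

lemma sortDesc_cons_max (a : ℕ) (s : Multiset ℕ) (h : ∀ x ∈ s, x ≤ a) :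
    sortDesc (a ::ₘ s) = a :: sortDesc s := by
  refine (fun hp h1 h2 => List.Perm.eq_of_pairwise' (r := (· ≥ ·)) h1 h2 hp) ?_ ?_ ?_
  · rw [← Multiset.coe_eq_coe, coe_sortDesc, ← Multiset.cons_coe, coe_sortDesc]
  · exact sortDesc_sorted _
  · rw [List.pairwise_cons]
    exact ⟨fun b hb => h b (mem_sortDesc.mp hb), sortDesc_sorted _⟩

/-- Key lemma: replacing an element `p` of a multiset `B` by any multiset `A` all of
whose elements are strictly less than `p` strictly decreases the multiset in the
lexicographic order on non-increasing enumerations. -/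
lemma key (B : Multiset ℕ) : ∀ (A : Multiset ℕ) (p : ℕ), p ∈ B → (∀ x ∈ A, x < p) →
    MultisetLexLT (A + B.erase p) B := by
  induction B using Multiset.strongInductionOn with
  | ih B IH =>
    intro A p hp hA
    -- take the maximum element `a` of `B`
    have hne : B.toFinset.Nonempty := ⟨p, Multiset.mem_toFinset.mpr hp⟩
    obtain ⟨a, haB, hmax⟩ : ∃ a ∈ B, ∀ x ∈ B, x ≤ a :=
      ⟨B.toFinset.max' hne, Multiset.mem_toFinset.mp (B.toFinset.max'_mem hne),
        fun x hx => B.toFinset.le_max' x (Multiset.mem_toFinset.mpr hx)⟩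
    have hpa : p ≤ a := hmax p hp
    have hsortB : sortDesc B = a :: sortDesc (B.erase a) := by
      conv_lhs => rw [← Multiset.cons_erase haB]
      exact sortDesc_cons_max a _ (fun x hx => hmax x (Multiset.mem_of_mem_erase hx))
    rcases eq_or_lt_of_le hpa with hpa' | hpa'
    · -- p = a : the maximum itself is removed
      subst hpa'
      by_cases haa : p ∈ B.erase p
      · -- another copy of `p` remains: peel it off and use the IH
        have h1 : A + B.erase p = p ::ₘ (A + (B.erase p).erase p) := by
          conv_lhs => rw [← Multiset.cons_erase haa, Multiset.add_cons]
        have h2 : sortDesc (A + B.erase p) = p :: sortDesc (A + (B.erase p).erase p) := by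
          rw [h1]
          apply sortDesc_cons_max
          intro x hx
          rcases Multiset.mem_add.mp hx with hx | hx
          · exact (hA x hx).le
          · exact hmax x (Multiset.mem_of_mem_erase (Multiset.mem_of_mem_erase hx))
        rw [multisetLexLT_iff, h2, hsortB]
        exact List.Lex.cons
          (IH (B.erase p) (Multiset.erase_lt.mpr hp) A p haa hA)
      · -- no copy of `p` remains: everything left is `< p`
        have hlt : ∀ x ∈ A + B.erase p, x < p := by
          intro x hx
          rcases Multiset.mem_add.mp hx with hx | hx
          · exact hA x hx
          · rcases lt_or_eq_of_le (hmax x (Multiset.mem_of_mem_erase hx)) with h | h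
            · exact h
            · exact absurd (h ▸ hx) haa
        rw [multisetLexLT_iff, hsortB]
        cases hcase : sortDesc (A + B.erase p) with
        | nil => exact List.Lex.nil
        | cons m rest =>
          have hm : m ∈ A + B.erase p := by
            rw [← mem_sortDesc, hcase]; exact List.mem_cons_self
          exact List.Lex.rel (hlt m hm)
    · -- p < a : peel off the maximum `a` and use the IH
      have hpa'' : p ≠ a := ne_of_lt hpa'
      have hp' : p ∈ B.erase a := (Multiset.mem_erase_of_ne hpa'').mpr hp
      have h1 : A + B.erase p = a ::ₘ (A + (B.erase a).erase p) := by
        conv_lhs => rw [← Multiset.cons_erase haB,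
          Multiset.erase_cons_tail _ (Ne.symm hpa''), Multiset.add_cons]
      have h2 : sortDesc (A + B.erase p) = a :: sortDesc (A + (B.erase a).erase p) := by
        rw [h1]
        apply sortDesc_cons_max
        intro x hx
        rcases Multiset.mem_add.mp hx with hx | hx
        · exact ((hA x hx).trans hpa').le
        · exact hmax x (Multiset.mem_of_mem_erase (Multiset.mem_of_mem_erase hx))
      rw [multisetLexLT_iff, h2, hsortB]
      exact List.Lex.cons
        (IH (B.erase a) (Multiset.erase_lt.mpr haB) A p hp' hA)

/-- Abstract form of the Scharlemann–Thompson reduction: a weak reduction of a thick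
level of complexity `p` produces complexities `d = c(F_D) < p`, `e = c(F_E) < p` and
`de = c(F_{DE}) < min(d, e)`.  Each of the four replacement operations — (1) replace `p`
by `{d, de, e}`; (2) replace `p` (together with the adjacent thin level) by `{de, e}`;
(3) by `{d, de}`; (4) by `{de}` — produces a multiset of thick-level complexities which
is strictly smaller in the lexicographic order on non-increasing enumerations. -/
theorem reduction_moves_decrease (S : Multiset ℕ) (p d de e : ℕ) (hp : p ∈ S)
    (hd : d < p) (he : e < p) (hded : de < d) (hdee : de < e) :
    MultisetLexLT (d ::ₘ de ::ₘ e ::ₘ S.erase p) S ∧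
    MultisetLexLT (de ::ₘ e ::ₘ S.erase p) S ∧
    MultisetLexLT (d ::ₘ de ::ₘ S.erase p) S ∧
    MultisetLexLT (de ::ₘ S.erase p) S := by
  have hde : de < p := hded.trans hd
  refine ⟨?_, ?_, ?_, ?_⟩
  · have h := key S (d ::ₘ de ::ₘ e ::ₘ 0) p hp (by
      intro x hx
      simp only [Multiset.mem_cons, Multiset.notMem_zero, or_false] at hx
      rcases hx with rfl | rfl | rfl <;> assumption)
    simpa [Multiset.cons_add] using h
  · have h := key S (de ::ₘ e ::ₘ 0) p hp (by
      intro x hx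
      simp only [Multiset.mem_cons, Multiset.notMem_zero, or_false] at hx
      rcases hx with rfl | rfl <;> assumption)
    simpa [Multiset.cons_add] using h
  · have h := key S (d ::ₘ de ::ₘ 0) p hp (by
      intro x hx
      simp only [Multiset.mem_cons, Multiset.notMem_zero, or_false] at hx
      rcases hx with rfl | rfl <;> assumption)
    simpa [Multiset.cons_add] using h
  · have h := key S (de ::ₘ 0) p hp (by
      intro x hx
      simp only [Multiset.mem_cons, Multiset.notMem_zero, or_false] at hx
      rcases hx with rfl; assumption)
    simpa [Multiset.cons_add] using h
end
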